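/- The composition axiom COMPKh is valid over all labeled transition system models: if Kh(p,r) and Kh(r,q) hold then Kh(p,q) holds, where Kh(ψ,φ) means there exists an action sequence σ such that from every ψ-world, σ is strongly executable and every σ-execution ends in a φ-world. -/
import Mathlib


variable {S A : Type*}

/-- Execution of an action sequence: s →_σ t. -/
def reach (R : A → S → S → Prop) : List A → S → S → Prop
  | [], s, t => s = t
  | a :: σ, s, t => ∃ u, R a s u ∧ reach R σ u t

/-- σ is strongly executable at s: at every stage of executing σ the next
action has a successor. -/
def stronglyExec (R : A → S → S → Prop) : List A → S → Prop
  | [], _ => True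
  | a :: σ, s => (∃ u, R a s u) ∧ ∀ u, R a s u → stronglyExec R σ u

/-- Kh(ψ,φ): there is an action sequence σ such that from every ψ-world,
σ is strongly executable and every σ-execution ends in a φ-world. -/
def kh (R : A → S → S → Prop) (ψ φ : S → Prop) : Prop :=
  ∃ σ : List A, ∀ s', ψ s' →
    stronglyExec R σ s' ∧ ∀ t, reach R σ s' t → φ t

lemma reach_append (R : A → S → S → Prop) (σ τ : List A) (s t : S) :
    reach R (σ ++ τ) s t ↔ ∃ u, reach R σ s u ∧ reach R τ u t := by
  induction σ generalizing s with
  | nil => simp [reach]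
  | cons a σ ih =>
    simp only [List.cons_append, reach]
    constructor
    · rintro ⟨u, hu, h⟩
      obtain ⟨v, hv1, hv2⟩ := (ih u).1 h
      exact ⟨v, ⟨u, hu, hv1⟩, hv2⟩
    · rintro ⟨v, ⟨u, hu, h1⟩, h2⟩
      exact ⟨u, hu, (ih u).2 ⟨v, h1, h2⟩⟩

lemma stronglyExec_append (R : A → S → S → Prop) (σ τ : List A) (s : S)
    (h1 : stronglyExec R σ s) (h2 : ∀ u, reach R σ s u → stronglyExec R τ u) :
    stronglyExec R (σ ++ τ) s := by
  induction σ generalizing s with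
  | nil => exact h2 s rfl
  | cons a σ ih =>
    obtain ⟨⟨u, hu⟩, hall⟩ := h1
    exact ⟨⟨u, hu⟩, fun v hv => ih v (hall v hv) (fun w hw => h2 w ⟨v, hv, hw⟩)⟩

/-- Axiom COMPKh: Kh(p,r) ∧ Kh(r,q) → Kh(p,q) is valid. -/
theorem compKh_valid (R : A → S → S → Prop) (p r q : S → Prop)
    (h1 : kh R p r) (h2 : kh R r q) : kh R p q := by
  obtain ⟨σ, hσ⟩ := h1
  obtain ⟨τ, hτ⟩ := h2
  refine ⟨σ ++ τ, fun s hs => ?_⟩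
  obtain ⟨hse, hr⟩ := hσ s hs
  constructor
  · exact stronglyExec_append R σ τ s hse (fun u hu => (hτ u (hr u hu)).1)
  · intro t ht
    obtain ⟨u, hu1, hu2⟩ := (reach_append R σ τ s t).1 ht
    exact (hτ u (hr u hu1)).2 t hu2
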